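/- arXiv:2409.08535 — 5 statements merged into one kernel-verified Lean document; each statement's English description precedes it below -/
import Mathlib

section
/- For all integers N ≥ 8, we have 3^N · C(N+2, N) ≤ C(2N+6, N). -/
lemma key_id (N : ℕ) :
    (N + 1) * ((N + 7) * Nat.choose (2 * N + 8) (N + 1))
      = (2 * N + 8) * ((2 * N + 7) * Nat.choose (2 * N + 6) N) := by
  have h1 : (2 * N + 7) * Nat.choose (2 * N + 6) N
      = Nat.choose (2 * N + 7) (N + 1) * (N + 1) := by
    have := Nat.add_one_mul_choose_eq (2 * N + 6) N
    simpa [Nat.succ_eq_add_one] using this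
  have h2 : (2 * N + 8) * Nat.choose (2 * N + 7) (N + 1)
      = Nat.choose (2 * N + 8) (N + 2) * (N + 2) := by
    have := Nat.add_one_mul_choose_eq (2 * N + 7) (N + 1)
    simpa [Nat.succ_eq_add_one, Nat.add_assoc] using this
  have h3 : Nat.choose (2 * N + 8) (N + 2) * (N + 2)
      = Nat.choose (2 * N + 8) (N + 1) * (N + 7) := by
    have := Nat.choose_succ_right_eq (2 * N + 8) (N + 1)
    have hsub : 2 * N + 8 - (N + 1) = N + 7 := by omega
    simpa [hsub, Nat.add_assoc] using this
  calc (N + 1) * ((N + 7) * Nat.choose (2 * N + 8) (N + 1))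
      = (Nat.choose (2 * N + 8) (N + 1) * (N + 7)) * (N + 1) := by ring
    _ = (Nat.choose (2 * N + 8) (N + 2) * (N + 2)) * (N + 1) := by rw [h3]
    _ = ((2 * N + 8) * Nat.choose (2 * N + 7) (N + 1)) * (N + 1) := by rw [h2]
    _ = (2 * N + 8) * (Nat.choose (2 * N + 7) (N + 1) * (N + 1)) := by ring
    _ = (2 * N + 8) * ((2 * N + 7) * Nat.choose (2 * N + 6) N) := by rw [h1]

theorem stmt_0 (N : ℕ) (hN : 8 ≤ N) :
    3 ^ N * Nat.choose (N + 2) N ≤ Nat.choose (2 * N + 6) N := by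
  induction N, hN using Nat.le_induction with
  | base => decide
  | succ N hN ih =>
    have h2N : 2 * (N + 1) + 6 = 2 * N + 8 := by ring
    rw [h2N]
    -- relate C(N+3, N+1) to C(N+2, N)
    have hc : (N + 3) * Nat.choose (N + 2) N = Nat.choose (N + 3) (N + 1) * (N + 1) := by
      have := Nat.add_one_mul_choose_eq (N + 2) N
      simpa [Nat.succ_eq_add_one, Nat.add_assoc] using this
    refine Nat.le_of_mul_le_mul_left ?_ (show 0 < (N + 1) * (N + 7) by positivity)
    conv_rhs => rw [mul_assoc, key_id]
    calc (N + 1) * (N + 7) * (3 ^ (N + 1) * Nat.choose (N + 1 + 2) (N + 1))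
        = (3 * (N + 7)) * (3 ^ N * (Nat.choose (N + 3) (N + 1) * (N + 1))) := by
          ring_nf
      _ = (3 * (N + 7)) * (3 ^ N * ((N + 3) * Nat.choose (N + 2) N)) := by rw [hc]
      _ = (3 * (N + 3) * (N + 7)) * (3 ^ N * Nat.choose (N + 2) N) := by ring
      _ ≤ ((2 * N + 8) * (2 * N + 7)) * Nat.choose (2 * N + 6) N := by
          apply Nat.mul_le_mul _ ih
          nlinarith
      _ = (2 * N + 8) * ((2 * N + 7) * Nat.choose (2 * N + 6) N) := by ring
end

section
/- Let N ≥ 3 be an integer, let k ≥ 5 be an integer, let ε be a real number with 0 ≤ ε < 1, and let m ≥ 1 be an integer. If k ≥ (1+ε)·2m/(N−1) + 1 + ε, then C((k−1)(m+N−1)+N−1, N) ≥ (k+ε)^N · C(m+N−1, N), where the left binomial coefficient is an integer binomial coefficient and the inequality is as real numbers (interpreting C(m+N−1, N) as a real number). -/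
set_option maxHeartbeats 1000000

open Finset

private lemma cast_descFactorial_prod (n r : ℕ) (h : r ≤ n) :
    ((n.descFactorial r : ℕ) : ℝ) = ∏ j ∈ Finset.range r, ((n : ℝ) - (j : ℝ)) := by
  rw [Nat.descFactorial_eq_prod_range, Nat.cast_prod]
  refine Finset.prod_congr rfl fun j hj => ?_
  have hj' := Finset.mem_range.mp hj
  exact_mod_cast Nat.cast_sub (by omega) (R := ℝ)

private lemma key_term (K E S mm x : ℝ) (hK : 5 ≤ K) (hE0 : 0 ≤ E) (hS : 2 ≤ S)
    (hmm : 1 ≤ mm) (hx0 : 0 ≤ x) (hxS : x ≤ S)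
    (hkey : (1 + E) * (2 * mm) ≤ (K - 1 - E) * S) :
    (K + E) ^ 2 * ((mm + S - x) * (mm + S - (S - x))) ≤
      ((K - 1) * (mm + S) + S - x) * ((K - 1) * (mm + S) + S - (S - x)) := by
  have hP : 0 ≤ (K - 1) * (mm + S) + S / 2 - (K + E) * (mm + S - S / 2) := by linarith [hkey]
  have hQ : 0 ≤ (K + E) * (mm + S - S / 2) := by
    apply mul_nonneg (by linarith)
    linarith
  have hk2 : (0:ℝ) ≤ (K + E) ^ 2 - 1 := by nlinarith
  have ht : 0 ≤ S ^ 2 / 4 - x * (S - x) := by nlinarith [sq_nonneg (S - 2 * x)]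
  nlinarith [mul_nonneg hP hP, mul_nonneg hP hQ, mul_nonneg hk2 ht]

theorem stmt_5 (N k m : ℕ) (hN : 3 ≤ N) (hk : 5 ≤ k) (hm : 1 ≤ m)
    (ε : ℝ) (hε0 : 0 ≤ ε) (hε1 : ε < 1)
    (hkε : (k : ℝ) ≥ (1 + ε) * (2 * m) / (N - 1) + 1 + ε) :
    (Nat.choose ((k - 1) * (m + N - 1) + N - 1) N : ℝ) ≥
      (k + ε) ^ N * (Nat.choose (m + N - 1) N : ℝ) := by
  have hK5 : (5 : ℝ) ≤ (k : ℝ) := by exact_mod_cast hk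
  have hm1 : (1 : ℝ) ≤ (m : ℝ) := by exact_mod_cast hm
  have hSr2 : (2 : ℝ) ≤ (N : ℝ) - 1 := by
    have : (3 : ℝ) ≤ (N : ℝ) := by exact_mod_cast hN
    linarith
  set M : ℕ := m + N - 1 with hM
  set n1 : ℕ := (k - 1) * M + N - 1 with hn1
  have hNM : N ≤ M := by omega
  have hMlead : M ≤ (k - 1) * M := Nat.le_mul_of_pos_left M (by omega)
  have hNn1 : N ≤ n1 := by omega
  -- cast equalities
  have hcastM : ((M : ℕ) : ℝ) = (m : ℝ) + ((N : ℝ) - 1) := by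
    have h : M = m + (N - 1) := by omega
    rw [h, Nat.cast_add, Nat.cast_sub (by omega)]
    push_cast; ring
  have hcastn1 : ((n1 : ℕ) : ℝ) = ((k : ℝ) - 1) * ((m : ℝ) + ((N : ℝ) - 1)) + ((N : ℝ) - 1) := by
    have h : n1 = (k - 1) * M + (N - 1) := by omega
    rw [h, Nat.cast_add, Nat.cast_mul, Nat.cast_sub (by omega : 1 ≤ k),
      Nat.cast_sub (by omega : 1 ≤ N), hcastM]
    push_cast; ring
  -- key hypothesis
  have hNpos : (0 : ℝ) < (N : ℝ) - 1 := by linarith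
  have hkey : (1 + ε) * (2 * m) ≤ ((k : ℝ) - 1 - ε) * ((N : ℝ) - 1) := by
    have h2 : (1 + ε) * (2 * m) / ((N : ℝ) - 1) ≤ (k : ℝ) - 1 - ε := by linarith
    exact (div_le_iff₀ hNpos).mp h2
  -- products
  set fA : ℕ → ℝ := fun j => ((n1 : ℕ) : ℝ) - (j : ℝ) with hfA
  set fB : ℕ → ℝ := fun j => ((M : ℕ) : ℝ) - (j : ℝ) with hfB
  set A : ℝ := ∏ j ∈ Finset.range N, fA j with hA
  set B : ℝ := ∏ j ∈ Finset.range N, fB j with hB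
  have hDA : ((n1.descFactorial N : ℕ) : ℝ) = A := cast_descFactorial_prod n1 N hNn1
  have hDB : ((M.descFactorial N : ℕ) : ℝ) = B := cast_descFactorial_prod M N hNM
  have hA0 : 0 ≤ A := hDA ▸ Nat.cast_nonneg _
  have hB0 : 0 ≤ B := hDB ▸ Nat.cast_nonneg _
  have hkE0 : (0 : ℝ) ≤ (k : ℝ) + ε := by linarith
  have hR0 : 0 ≤ ((k : ℝ) + ε) ^ N * B := mul_nonneg (pow_nonneg hkE0 N) hB0
  -- reflected cast: for j < N, ((N - 1 - j : ℕ) : ℝ) = (N:ℝ) - 1 - j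
  have hrefcast : ∀ j ∈ Finset.range N, ((N - 1 - j : ℕ) : ℝ) = (N : ℝ) - 1 - (j : ℝ) := by
    intro j hj
    have hj' := Finset.mem_range.mp hj
    have h : N - 1 - j = N - (1 + j) := by omega
    rw [h, Nat.cast_sub (by omega)]
    push_cast; ring
  -- squared inequality
  have hsq : (((k : ℝ) + ε) ^ N * B) ^ 2 ≤ A ^ 2 := by
    have hAre : ∏ j ∈ Finset.range N, fA (N - 1 - j) = A := Finset.prod_range_reflect fA N
    have hBre : ∏ j ∈ Finset.range N, fB (N - 1 - j) = B := Finset.prod_range_reflect fB N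
    have hA2 : A ^ 2 = ∏ j ∈ Finset.range N, (fA j * fA (N - 1 - j)) := by
      rw [Finset.prod_mul_distrib, hAre]; ring
    have hB2 : (((k : ℝ) + ε) ^ N * B) ^ 2
        = ∏ j ∈ Finset.range N, (((k : ℝ) + ε) ^ 2 * (fB j * fB (N - 1 - j))) := by
      rw [Finset.prod_mul_distrib, Finset.prod_mul_distrib, hBre, Finset.prod_const,
        Finset.card_range, mul_pow, ← pow_mul, ← pow_mul]
      ring
    rw [hA2, hB2]
    apply Finset.prod_le_prod
    · intro j hj
      have hj' := Finset.mem_range.mp hj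
      have hx0 : (0 : ℝ) ≤ (j : ℝ) := Nat.cast_nonneg j
      have hxS : (j : ℝ) ≤ (N : ℝ) - 1 := by
        have : (j : ℝ) + 1 ≤ (N : ℝ) := by exact_mod_cast hj'
        linarith
      have h1 : 0 ≤ fB j := by
        simp only [hfB]; rw [hcastM]; linarith
      have h2 : 0 ≤ fB (N - 1 - j) := by
        simp only [hfB]; rw [hcastM, hrefcast j hj]; linarith
      exact mul_nonneg (sq_nonneg _) (mul_nonneg h1 h2)
    · intro j hj
      have hj' := Finset.mem_range.mp hj
      have hx0 : (0 : ℝ) ≤ (j : ℝ) := Nat.cast_nonneg j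
      have hxS : (j : ℝ) ≤ (N : ℝ) - 1 := by
        have : (j : ℝ) + 1 ≤ (N : ℝ) := by exact_mod_cast hj'
        linarith
      simp only [hfA, hfB]
      rw [hcastM, hcastn1, hrefcast j hj]
      have := key_term (k : ℝ) ε ((N : ℝ) - 1) (m : ℝ) (j : ℝ)
        hK5 hε0 hSr2 hm1 hx0 hxS hkey
      linarith [this]
  -- take square roots
  have hmain : ((k : ℝ) + ε) ^ N * B ≤ A := by
    have h := Real.sqrt_le_sqrt hsq
    rwa [Real.sqrt_sq hR0, Real.sqrt_sq hA0] at h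
  -- convert back to choose
  have hNf : (0 : ℝ) < (N.factorial : ℝ) := by exact_mod_cast N.factorial_pos
  rw [ge_iff_le, ← mul_le_mul_iff_right₀ hNf]
  have e1 : (N.factorial : ℝ) * (n1.choose N : ℝ) = ((n1.descFactorial N : ℕ) : ℝ) := by
    rw [Nat.descFactorial_eq_factorial_mul_choose]; push_cast; ring
  have e2 : (N.factorial : ℝ) * (M.choose N : ℝ) = ((M.descFactorial N : ℕ) : ℝ) := by
    rw [Nat.descFactorial_eq_factorial_mul_choose]; push_cast; ring
  calc (N.factorial : ℝ) * (((k : ℝ) + ε) ^ N * (M.choose N : ℝ))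
      = ((k : ℝ) + ε) ^ N * ((N.factorial : ℝ) * (M.choose N : ℝ)) := by ring
    _ = ((k : ℝ) + ε) ^ N * B := by rw [e2, hDB]
    _ ≤ A := hmain
    _ = ((n1.descFactorial N : ℕ) : ℝ) := hDA.symm
    _ = (N.factorial : ℝ) * (n1.choose N : ℝ) := e1.symm
end

section
/- Let N ≥ 3 and ℓ ≥ 5 be integers with ℓ ≤ (5 + √(8N+17))/2. Then (N+1)·C(N+ℓ, N) ≥ C(N+2, N)·C(N+ℓ−2, N). -/
theorem stmt_8 (N ℓ : ℕ) (hN : 3 ≤ N) (hℓ : 5 ≤ ℓ)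
    (hub : (ℓ : ℝ) ≤ (5 + Real.sqrt (8 * N + 17)) / 2) :
    (N + 1) * Nat.choose (N + ℓ) N ≥
      Nat.choose (N + 2) N * Nat.choose (N + ℓ - 2) N := by
  have hx : (0:ℝ) ≤ 8*N+17 := by positivity
  have hs := Real.sq_sqrt hx
  have hℓ' : (5:ℝ) ≤ (ℓ:ℝ) := by exact_mod_cast hℓ
  have hkey : (ℓ:ℝ)*ℓ + 2 ≤ 5*ℓ + 2*N := by
    nlinarith [Real.sqrt_nonneg ((8:ℝ)*N+17), hub, hs, hℓ']
  have hnat : ℓ*ℓ + 2 ≤ 5*ℓ + 2*N := by exact_mod_cast hkey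
  obtain ⟨a, rfl⟩ : ∃ a, ℓ = a + 2 := ⟨ℓ-2, by omega⟩
  have hsub : N + (a+2) - 2 = N + a := by omega
  rw [hsub]
  have id1 : (N+a+1) * Nat.choose (N+a) a = Nat.choose (N+a+1) (a+1) * (a+1) :=
    Nat.add_one_mul_choose_eq (N+a) a
  have id2 : (N+a+2) * Nat.choose (N+a+1) (a+1) = Nat.choose (N+a+2) (a+2) * (a+2) :=
    Nat.add_one_mul_choose_eq (N+a+1) (a+1)
  have sym1 : Nat.choose (N+a) N = Nat.choose (N+a) a := Nat.choose_symm_add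
  have heq : N+(a+2) = N+a+2 := rfl
  have sym2 : Nat.choose (N+(a+2)) N = Nat.choose (N+a+2) (a+2) := by
    rw [← heq]; exact Nat.choose_symm_add
  have E1 : Nat.choose (N+(a+2)) N * ((a+2)*(a+1)) =
      Nat.choose (N+a) N * ((N+a+2)*(N+a+1)) := by
    rw [sym1, sym2]
    calc Nat.choose (N+a+2) (a+2) * ((a+2)*(a+1))
        = (Nat.choose (N+a+2) (a+2) * (a+2)) * (a+1) := by ring
      _ = ((N+a+2) * Nat.choose (N+a+1) (a+1)) * (a+1) := by rw [← id2]
      _ = (N+a+2) * ((N+a+1) * Nat.choose (N+a) a) := by rw [id1]; ring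
      _ = Nat.choose (N+a) a * ((N+a+2)*(N+a+1)) := by ring
  have E2 : Nat.choose (N+2) N * 2 = (N+2)*(N+1) := by
    have s3 : Nat.choose (N+2) N = Nat.choose (N+2) 2 := Nat.choose_symm_add
    have i2 : (N+2) * Nat.choose (N+1) 1 = Nat.choose (N+2) 2 * 2 :=
      Nat.add_one_mul_choose_eq (N+1) 1
    rw [s3, ← i2, Nat.choose_one_right]
  have ineq : (N+2)*((a+2)*(a+1)) ≤ 2*((N+a+2)*(N+a+1)) := by nlinarith [hnat]
  have hpos : 0 < 2*((a+2)*(a+1)) := by positivity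
  apply Nat.le_of_mul_le_mul_right _ hpos
  calc Nat.choose (N+2) N * Nat.choose (N+a) N * (2*((a+2)*(a+1)))
      = (Nat.choose (N+2) N * 2) * (Nat.choose (N+a) N * ((a+2)*(a+1))) := by ring
    _ = (N+2)*(N+1) * (Nat.choose (N+a) N * ((a+2)*(a+1))) := by rw [E2]
    _ = (N+1) * Nat.choose (N+a) N * ((N+2)*((a+2)*(a+1))) := by ring
    _ ≤ (N+1) * Nat.choose (N+a) N * (2*((N+a+2)*(N+a+1))) :=
        Nat.mul_le_mul_left _ ineq
    _ = (N+1) * (Nat.choose (N+a) N * ((N+a+2)*(N+a+1))) * 2 := by ring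
    _ = (N+1) * (Nat.choose (N+(a+2)) N * ((a+2)*(a+1))) * 2 := by rw [E1]
    _ = (N+1) * Nat.choose (N+(a+2)) N * (2*((a+2)*(a+1))) := by ring
end

section
/- Let N ≥ 8 be an integer and set ℓ₀ = ⌈(5+√(8N+17))/2⌉ + 1. Then (N+ℓ₀−2)!/(ℓ₀!·(N+2)!) · (ℓ₀² − 5ℓ₀ − (2N−2)) ≥ 1/2. -/
set_option maxHeartbeats 1000000

lemma fact_aux (k t : ℕ) (ht : 4 ≤ t) :
    Nat.factorial (k + 4) * Nat.factorial t ≤ 24 * Nat.factorial (t + k) := by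
  induction k with
  | zero =>
      have h4 : Nat.factorial (0 + 4) = 24 := rfl
      rw [h4, Nat.add_zero]
  | succ k ih =>
      have h1 : Nat.factorial (k + 1 + 4) = (k + 5) * Nat.factorial (k + 4) := by
        rw [show k + 1 + 4 = (k + 4) + 1 by ring, Nat.factorial_succ]
      have h2 : Nat.factorial (t + (k + 1)) = (t + k + 1) * Nat.factorial (t + k) := by
        rw [show t + (k + 1) = (t + k) + 1 by ring, Nat.factorial_succ]
      rw [h1, h2]
      calc (k + 5) * Nat.factorial (k + 4) * Nat.factorial t
          = (k + 5) * (Nat.factorial (k + 4) * Nat.factorial t) := by ring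
        _ ≤ (t + k + 1) * (24 * Nat.factorial (t + k)) :=
            Nat.mul_le_mul (by omega) ih
        _ = 24 * ((t + k + 1) * Nat.factorial (t + k)) := by ring

theorem stmt_10 (N : ℕ) (hN : 8 ≤ N)
    (ℓ₀ : ℕ) (hℓ₀ : ℓ₀ = ⌈(5 + Real.sqrt (8 * N + 17)) / 2⌉₊ + 1) :
    (Nat.factorial (N + ℓ₀ - 2) : ℝ) /
        (Nat.factorial ℓ₀ * Nat.factorial (N + 2)) *
        ((ℓ₀ : ℝ) ^ 2 - 5 * ℓ₀ - (2 * N - 2)) ≥ 1 / 2 := by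
  set s : ℝ := Real.sqrt (8 * N + 17) with hs
  have hNr : (8 : ℝ) ≤ (N : ℝ) := by exact_mod_cast hN
  have hs0 : 0 ≤ s := Real.sqrt_nonneg _
  have hs2 : s ^ 2 = 8 * N + 17 := Real.sq_sqrt (by positivity)
  have hs9 : 9 ≤ s := by nlinarith [sq_nonneg (s - 9)]
  have hargnn : (0:ℝ) ≤ (5 + s) / 2 := by linarith
  have hceil1 : (5 + s) / 2 ≤ (⌈(5 + s) / 2⌉₊ : ℝ) := Nat.le_ceil _
  have hceil2 : (⌈(5 + s) / 2⌉₊ : ℝ) < (5 + s) / 2 + 1 := Nat.ceil_lt_add_one hargnn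
  have hlr1 : (5 + s) / 2 + 1 ≤ (ℓ₀ : ℝ) := by
    rw [hℓ₀]; push_cast; linarith
  have hlr2 : (ℓ₀ : ℝ) < (5 + s) / 2 + 2 := by
    rw [hℓ₀]; push_cast; linarith
  have hl8 : 8 ≤ ℓ₀ := by
    have : (8 : ℝ) ≤ (ℓ₀ : ℝ) := by linarith
    exact_mod_cast this
  clear hℓ₀
  obtain ⟨L, rfl⟩ := Nat.exists_eq_add_of_le hl8
  have hLr : (0:ℝ) ≤ (L : ℝ) := Nat.cast_nonneg _
  have hcast : ((8 + L : ℕ) : ℝ) = 8 + (L : ℝ) := by push_cast; ring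
  rw [hcast] at hlr1 hlr2
  set l : ℝ := (L : ℝ)
  set n : ℝ := (N : ℝ)
  -- bounds from squaring
  have hup : 2 * n ≤ l ^ 2 + 9 * l + 16 := by
    have h1 : s ≤ 2 * l + 9 := by linarith
    nlinarith
  have hlow : l ^ 2 + 7 * l + 8 < 2 * n := by
    have h1 : 2 * l + 7 < s := by linarith
    nlinarith
  -- quadratic lower bound
  have hQ : (l + 10 : ℝ) ≤ ((8 + L : ℕ) : ℝ) ^ 2 - 5 * ((8 + L : ℕ) : ℝ) - (2 * n - 2) := by
    rw [hcast]; nlinarith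
  -- factorial inequality in ℕ
  have hfacN : Nat.factorial (8 + L) * Nat.factorial (N + 2) * ((N + L + 6) * (N + L + 5))
      ≤ 24 * ((8 + L) * (7 + L)) * Nat.factorial (N + 6 + L) := by
    have h0 := fact_aux (L + 2) (N + 2) (by omega)
    have e1 : L + 2 + 4 = L + 6 := by ring
    have e2 : N + 2 + (L + 2) = N + L + 4 := by ring
    rw [e1, e2] at h0
    have e3 : Nat.factorial (8 + L) = (8 + L) * ((7 + L) * Nat.factorial (L + 6)) := by
      rw [show (8 + L) = (7 + L) + 1 by ring, Nat.factorial_succ,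
        show (7 + L) = (L + 6) + 1 by ring, Nat.factorial_succ]
    have e4 : Nat.factorial (N + 6 + L)
        = (N + L + 6) * ((N + L + 5) * Nat.factorial (N + L + 4)) := by
      rw [show N + 6 + L = (N + L + 5) + 1 by ring, Nat.factorial_succ,
        show N + L + 5 = (N + L + 4) + 1 by ring, Nat.factorial_succ]
    calc Nat.factorial (8 + L) * Nat.factorial (N + 2) * ((N + L + 6) * (N + L + 5))
        = ((N + L + 6) * (N + L + 5)) * ((8 + L) * (7 + L)) *
            (Nat.factorial (L + 6) * Nat.factorial (N + 2)) := by rw [e3]; ring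
      _ ≤ ((N + L + 6) * (N + L + 5)) * ((8 + L) * (7 + L)) * (24 * Nat.factorial (N + L + 4)) :=
          Nat.mul_le_mul_left _ h0
      _ = 24 * ((8 + L) * (7 + L)) * Nat.factorial (N + 6 + L) := by rw [e4]; ring
  -- move to ℝ
  have hidx : N + (8 + L) - 2 = N + 6 + L := by omega
  rw [hidx]
  set A : ℝ := (Nat.factorial (8 + L) : ℝ) with hA
  set B : ℝ := (Nat.factorial (N + 2) : ℝ) with hB
  set F : ℝ := (Nat.factorial (N + 6 + L) : ℝ) with hF
  have hfacR : A * B * ((n + l + 6) * (n + l + 5))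
      ≤ 24 * ((8 + l) * (7 + l)) * F := by
    have h' : ((Nat.factorial (8 + L) * Nat.factorial (N + 2) * ((N + L + 6) * (N + L + 5)) : ℕ) : ℝ)
        ≤ ((24 * ((8 + L) * (7 + L)) * Nat.factorial (N + 6 + L) : ℕ) : ℝ) := by
      exact_mod_cast hfacN
    push_cast at h'
    rw [hA, hB, hF]
    convert h' using 2 <;> push_cast <;> ring
  have hFpos : (0:ℝ) < F := by rw [hF]; positivity
  have hApos : (0:ℝ) < A := by rw [hA]; positivity
  have hBpos : (0:ℝ) < B := by rw [hB]; positivity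
  rw [ge_iff_le, div_mul_eq_mul_div, le_div_iff₀ (by positivity)]
  -- numeric inequality
  have hnum : 12 * ((8 + l) * (7 + l)) ≤ (n + l + 6) * (n + l + 5) * (l + 10) := by
    have h1 : (l^2 + 9*l + 20) / 2 ≤ n + l + 6 := by linarith
    have h2 : (l^2 + 9*l + 18) / 2 ≤ n + l + 5 := by linarith
    have hp2 : (0:ℝ) < (l^2 + 9*l + 18) / 2 := by positivity
    have hp1 : (0:ℝ) ≤ (l^2 + 9*l + 20) / 2 := by positivity
    have hmul : (l^2 + 9*l + 20) / 2 * ((l^2 + 9*l + 18) / 2) * (l + 10)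
        ≤ (n + l + 6) * (n + l + 5) * (l + 10) := by
      apply mul_le_mul_of_nonneg_right _ (by linarith)
      exact mul_le_mul h1 h2 (le_of_lt hp2) (by linarith)
    have hpoly : 12 * ((8 + l) * (7 + l))
        ≤ (l^2 + 9*l + 20) / 2 * ((l^2 + 9*l + 18) / 2) * (l + 10) := by
      nlinarith [hLr, mul_nonneg hLr hLr, mul_nonneg (mul_nonneg hLr hLr) hLr,
        mul_nonneg (mul_nonneg (mul_nonneg hLr hLr) hLr) hLr,
        mul_nonneg (mul_nonneg (mul_nonneg (mul_nonneg hLr hLr) hLr) hLr) hLr]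
    linarith
  have hQpos : (0:ℝ) < l + 10 := by linarith
  have hp : (0:ℝ) < 12 * ((8 + l) * (7 + l)) := by positivity
  have hc : (12 * ((8 + l) * (7 + l))) * (A * B)
      ≤ (12 * ((8 + l) * (7 + l))) * (2 * (F * (l + 10))) := by
    calc (12 * ((8 + l) * (7 + l))) * (A * B)
        = A * B * (12 * ((8 + l) * (7 + l))) := by ring
      _ ≤ A * B * ((n + l + 6) * (n + l + 5) * (l + 10)) :=
          mul_le_mul_of_nonneg_left hnum (by positivity)
      _ = (A * B * ((n + l + 6) * (n + l + 5))) * (l + 10) := by ring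
      _ ≤ (24 * ((8 + l) * (7 + l)) * F) * (l + 10) :=
          mul_le_mul_of_nonneg_right hfacR (le_of_lt hQpos)
      _ = (12 * ((8 + l) * (7 + l))) * (2 * (F * (l + 10))) := by ring
  have hABle : A * B ≤ 2 * (F * (l + 10)) := le_of_mul_le_mul_left hc hp
  have hstep : F * (l + 10) ≤ F * (((8 + L : ℕ) : ℝ) ^ 2 - 5 * ((8 + L : ℕ) : ℝ) - (2 * n - 2)) :=
    mul_le_mul_of_nonneg_left hQ (le_of_lt hFpos)
  linarith
end

section
/- Let N ≥ 8 be an integer and ℓ ≥ (5+√(8N+17))/2 + 1 an integer. Then C(N+ℓ, N)/C(N+2, N) ≥ C(N−1+ℓ, N−1)/C(N+1, N−1) + C(N+ℓ−2, N−1)/C(N+1, N−1) + 1, as real numbers. -/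
lemma choose_mono_right' {n a b : ℕ} (hab : a ≤ b) (hb : b ≤ n / 2) :
    Nat.choose n a ≤ Nat.choose n b := by
  induction b, hab using Nat.le_induction with
  | base => rfl
  | succ k hk ih =>
    exact (ih (by omega)).trans (Nat.choose_le_succ_of_lt_half_left (by omega))

lemma choose8_lb (m j : ℕ) : Nat.choose (m + j + 16) 8 ≤ Nat.choose (m + j + 16) (m + 8) := by
  rcases le_or_gt m j with h | h
  · exact choose_mono_right' (by omega) (by omega)
  · calc Nat.choose (m + j + 16) 8 ≤ Nat.choose (m + j + 16) (j + 8) :=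
        choose_mono_right' (by omega) (by omega)
      _ = Nat.choose (m + j + 16) (m + 8) := by
        rw [← Nat.choose_symm (by omega : j + 8 ≤ m + j + 16)]
        congr 1; omega

lemma choose8_val (n : ℕ) :
    40320 * Nat.choose n 8
      = n * (n-1) * (n-2) * (n-3) * (n-4) * (n-5) * (n-6) * (n-7) := by
  have h := (Nat.descFactorial_eq_factorial_mul_choose n 8).symm
  rw [show Nat.factorial 8 = 40320 by decide] at h
  rw [h]
  simp [Nat.descFactorial]
  ring

lemma choose2_real (n : ℕ) :
    (Nat.choose (n + 2) 2 : ℝ) = ((n : ℝ) + 1) * ((n : ℝ) + 2) / 2 := by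
  have hev : 2 ∣ (n + 2) * (n + 1) := by
    have h := (Nat.even_mul_succ_self (n + 1)).two_dvd
    rwa [Nat.mul_comm] at h
  have h2 : 2 * Nat.choose (n + 2) 2 = (n + 2) * (n + 1) := by
    rw [Nat.choose_two_right, show n + 2 - 1 = n + 1 from rfl, Nat.mul_div_cancel' hev]
  have := congrArg (Nat.cast : ℕ → ℝ) h2
  push_cast at this
  linarith

set_option maxHeartbeats 2000000 in
theorem stmt_11 (N ℓ : ℕ) (hN : 8 ≤ N)
    (hℓ : (ℓ : ℝ) ≥ (5 + Real.sqrt (8 * N + 17)) / 2 + 1) :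
    (Nat.choose (N + ℓ) N : ℝ) / Nat.choose (N + 2) N ≥
      (Nat.choose (N - 1 + ℓ) (N - 1) : ℝ) / Nat.choose (N + 1) (N - 1) +
      (Nat.choose (N + ℓ - 2) (N - 1) : ℝ) / Nat.choose (N + 1) (N - 1) + 1 := by
  -- derive ℓ ≥ 8 and the quadratic bound
  have hs9 : (9:ℝ) ≤ Real.sqrt (8 * N + 17) := by
    rw [show (9:ℝ) = Real.sqrt 81 by
      rw [show (81:ℝ) = 9^2 by norm_num, Real.sqrt_sq]; norm_num]
    apply Real.sqrt_le_sqrt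
    have : (8:ℝ) ≤ (N:ℝ) := by exact_mod_cast hN
    linarith
  have hl8 : 8 ≤ ℓ := by
    have : (8:ℝ) ≤ (ℓ:ℝ) := by linarith
    exact_mod_cast this
  have hsq : (8 * (N:ℝ) + 17) ≤ (2 * (ℓ:ℝ) - 7)^2 := by
    have h1 : Real.sqrt (8 * N + 17) ≤ 2 * (ℓ:ℝ) - 7 := by linarith
    have h2 : (0:ℝ) ≤ 8 * (N:ℝ) + 17 := by positivity
    calc (8 * (N:ℝ) + 17) = (Real.sqrt (8 * N + 17))^2 := (Real.sq_sqrt h2).symm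
      _ ≤ (2 * (ℓ:ℝ) - 7)^2 := by
        apply pow_le_pow_left₀ (Real.sqrt_nonneg _) h1
  obtain ⟨m, rfl⟩ : ∃ m, N = m + 8 := ⟨N - 8, by omega⟩
  obtain ⟨j, rfl⟩ : ∃ j, ℓ = j + 8 := ⟨ℓ - 8, by omega⟩
  have hmj : 2 * (m:ℝ) ≤ (j:ℝ)^2 + 9*j := by
    push_cast at hsq
    nlinarith [hsq]
  have hm0 : (0:ℝ) ≤ (m:ℝ) := Nat.cast_nonneg m
  have hj0 : (0:ℝ) ≤ (j:ℝ) := Nat.cast_nonneg j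
  -- rewrite indices
  have e2 : m + 8 + (j + 8) = m + j + 16 := by omega
  have e3 : m + 8 - 1 + (j + 8) = m + j + 15 := by omega
  have e4 : m + 8 + (j + 8) - 2 = m + j + 14 := by omega
  have e5 : m + 8 + 2 = m + 10 := by omega
  have e6 : m + 8 + 1 = m + 9 := by omega
  have e1 : m + 8 - 1 = m + 7 := by omega
  rw [e3, e4, e2, e5, e6, e1]
  -- nat identities
  have hABn : (m + j + 16) * Nat.choose (m + j + 15) (m + 7)
      = Nat.choose (m + j + 16) (m + 8) * (m + 8) := by
    have h := Nat.add_one_mul_choose_eq (m + j + 15) (m + 7)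
    rwa [show m + j + 15 + 1 = m + j + 16 from by omega,
      show m + 7 + 1 = m + 8 from by omega] at h
  have hBCn : Nat.choose (m + j + 14) (m + 7) * (m + j + 15)
      = Nat.choose (m + j + 15) (m + 7) * (j + 8) := by
    have h := Nat.choose_mul_succ_eq (m + j + 14) (m + 7)
    rwa [show m + j + 14 + 1 = m + j + 15 from by omega,
      show m + j + 15 - (m + 7) = j + 8 from by omega] at h
  have hA8n : 40320 * Nat.choose (m + j + 16) 8
      = (m+j+16) * (m+j+15) * (m+j+14) * (m+j+13) * (m+j+12) * (m+j+11) * (m+j+10) * (m+j+9) := by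
    rw [choose8_val (m + j + 16)]
    simp only [show m+j+16-1 = m+j+15 from by omega, show m+j+16-2 = m+j+14 from by omega,
      show m+j+16-3 = m+j+13 from by omega, show m+j+16-4 = m+j+12 from by omega,
      show m+j+16-5 = m+j+11 from by omega, show m+j+16-6 = m+j+10 from by omega,
      show m+j+16-7 = m+j+9 from by omega]
  obtain ⟨A, hA⟩ : ∃ x : ℝ, (Nat.choose (m + j + 16) (m + 8) : ℝ) = x := ⟨_, rfl⟩
  obtain ⟨B, hB⟩ : ∃ x : ℝ, (Nat.choose (m + j + 15) (m + 7) : ℝ) = x := ⟨_, rfl⟩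
  obtain ⟨C, hC⟩ : ∃ x : ℝ, (Nat.choose (m + j + 14) (m + 7) : ℝ) = x := ⟨_, rfl⟩
  rw [hA, hB, hC]
  -- real versions
  have hAB : ((m:ℝ) + j + 16) * B = A * ((m:ℝ) + 8) := by
    have h := congrArg (Nat.cast : ℕ → ℝ) hABn
    push_cast at h
    rw [hA, hB] at h
    linarith [h]
  have hBC : C * ((m:ℝ) + j + 15) = B * ((j:ℝ) + 8) := by
    have h := congrArg (Nat.cast : ℕ → ℝ) hBCn
    push_cast at h
    rw [hB, hC] at h
    linarith [h]
  have hA0 : (0:ℝ) ≤ A := hA ▸ Nat.cast_nonneg _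
  have hPA : ((m:ℝ)+j+16) * ((m:ℝ)+j+15) * (((m:ℝ)+j+14) * ((m:ℝ)+j+13) * ((m:ℝ)+j+12) * ((m:ℝ)+j+11)) * (((m:ℝ)+j+9) * ((m:ℝ)+j+10)) / 40320 ≤ A := by
    have h1 : (Nat.choose (m + j + 16) 8 : ℝ) ≤ A := by
      rw [← hA]; exact_mod_cast choose8_lb m j
    have h2 := congrArg (Nat.cast : ℕ → ℝ) hA8n
    push_cast at h2
    linarith [h1, h2]
  -- denominators
  have hD2 : (Nat.choose (m + 10) (m + 8) : ℝ) = ((m:ℝ) + 9) * ((m:ℝ) + 10) / 2 := by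
    have hsym : Nat.choose (m + 10) (m + 8) = Nat.choose (m + 10) 2 := by
      conv_lhs => rw [show m + 8 = m + 10 - 2 from by omega]
      exact Nat.choose_symm (by omega)
    rw [hsym, show m + 10 = (m + 8) + 2 from by omega, choose2_real]
    push_cast; ring
  have hD1 : (Nat.choose (m + 9) (m + 7) : ℝ) = ((m:ℝ) + 8) * ((m:ℝ) + 9) / 2 := by
    have hsym : Nat.choose (m + 9) (m + 7) = Nat.choose (m + 9) 2 := by
      conv_lhs => rw [show m + 7 = m + 9 - 2 from by omega]
      exact Nat.choose_symm (by omega)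
    rw [hsym, show m + 9 = (m + 7) + 2 from by omega, choose2_real]
    push_cast; ring
  rw [hD2, hD1]
  clear hABn hBCn hA8n hA hB hC hD1 hD2 hsq hs9 hℓ hN hl8
  -- substitute ratios
  have h16 : ((m:ℝ) + j + 16) ≠ 0 := by positivity
  have h15 : ((m:ℝ) + j + 15) ≠ 0 := by positivity
  have hb : B = A * ((m:ℝ) + 8) / ((m:ℝ) + j + 16) := by
    rw [eq_div_iff h16]; linarith [hAB]
  have hc : C = A * ((m:ℝ) + 8) / ((m:ℝ) + j + 16) * ((j:ℝ) + 8) / ((m:ℝ) + j + 15) := by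
    rw [← hb, eq_div_iff h15]; linarith [hBC]
  -- key inequality
  have t1 : (10:ℝ) ≤ (j:ℝ)^2 + 11*j + 10 - 2*m := by nlinarith [hmj, hj0]
  have t2 : (24024:ℝ) ≤ ((m:ℝ)+j+14) * ((m:ℝ)+j+13) * ((m:ℝ)+j+12) * ((m:ℝ)+j+11) := by
    calc (24024:ℝ) = 14 * 13 * 12 * 11 := by norm_num
      _ ≤ ((m:ℝ)+j+14) * ((m:ℝ)+j+13) * ((m:ℝ)+j+12) * ((m:ℝ)+j+11) := by
        gcongr <;> linarith
  have t3 : ((m:ℝ)+9) * ((m:ℝ)+10) ≤ ((m:ℝ)+j+9) * ((m:ℝ)+j+10) := by nlinarith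
  have t4 : (24024:ℝ) * (((m:ℝ)+9) * ((m:ℝ)+10))
      ≤ (((m:ℝ)+j+14) * ((m:ℝ)+j+13) * ((m:ℝ)+j+12) * ((m:ℝ)+j+11)) * (((m:ℝ)+j+9) * ((m:ℝ)+j+10)) :=
    mul_le_mul t2 t3 (by positivity) (by positivity)
  have t5 := mul_le_mul_of_nonneg_left t4 (by positivity : (0:ℝ) ≤ ((m:ℝ)+j+16) * ((m:ℝ)+j+15))
  have hFmm : (0:ℝ) ≤ ((m:ℝ)+j+16) * ((m:ℝ)+j+15) * (((m:ℝ)+9) * ((m:ℝ)+10)) := by positivity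
  have step1 : ((m:ℝ)+j+16) * ((m:ℝ)+j+15) * (((m:ℝ)+j+14) * ((m:ℝ)+j+13) * ((m:ℝ)+j+12) * ((m:ℝ)+j+11)) * (((m:ℝ)+j+9) * ((m:ℝ)+j+10)) / 40320 * 10
      ≤ A * ((j:ℝ)^2 + 11*j + 10 - 2*m) :=
    mul_le_mul hPA t1 (by norm_num) hA0
  have key : ((m:ℝ)+9) * ((m:ℝ)+10) * (((m:ℝ)+j+16) * ((m:ℝ)+j+15))
      ≤ 2 * (A * ((j:ℝ)^2 + 11*j + 10 - 2*m)) := by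
    nlinarith [step1, t5, hFmm]
  -- expand the difference
  have hdpos : (0:ℝ) < ((m:ℝ)+9) * ((m:ℝ)+10) * (((m:ℝ)+j+16) * ((m:ℝ)+j+15)) := by positivity
  have expand : A / (((m:ℝ) + 9) * ((m:ℝ) + 10) / 2)
      - (B / (((m:ℝ) + 8) * ((m:ℝ) + 9) / 2) + C / (((m:ℝ) + 8) * ((m:ℝ) + 9) / 2) + 1)
      = (2 * (A * ((j:ℝ)^2 + 11*j + 10 - 2*m))
          - ((m:ℝ)+9) * ((m:ℝ)+10) * (((m:ℝ)+j+16) * ((m:ℝ)+j+15)))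
        / (((m:ℝ)+9) * ((m:ℝ)+10) * (((m:ℝ)+j+16) * ((m:ℝ)+j+15))) := by
    rw [hb, hc]
    field_simp
    ring
  have hfrac : (0:ℝ) ≤ (2 * (A * ((j:ℝ)^2 + 11*j + 10 - 2*m))
          - ((m:ℝ)+9) * ((m:ℝ)+10) * (((m:ℝ)+j+16) * ((m:ℝ)+j+15)))
        / (((m:ℝ)+9) * ((m:ℝ)+10) * (((m:ℝ)+j+16) * ((m:ℝ)+j+15))) :=
    div_nonneg (by linarith [key]) (le_of_lt hdpos)
  linarith [expand, hfrac]
end
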